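/- Let A be a subset of a group G that is nowhere dense with respect to some left-invariant totally bounded topology on G. Then for every finite set F ⊆ G the complement G \ FA is large; consequently A is small. -/

import Mathlib

open scoped Pointwise Topology

/-- A subset `A` of a group `G` is *large* if `F * A = G` for some finite `F ⊆ G`. -/
def IsLarge {G : Type*} [Group G] (A : Set G) : Prop :=
  ∃ F : Finset G, (F : Set G) * A = Set.univ

/-- A subset `A` of a group `G` is *small* if `B \ A` is large for every large `B ⊆ G`. -/
def IsSmallSet {G : Type*} [Group G] (A : Set G) : Prop :=
  ∀ B : Set G, IsLarge B → IsLarge (B \ A)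

/-- A topology on a group `G` is *left-invariant* if every left translation
`x ↦ g * x` is a homeomorphism. -/
def IsLeftInvariantTop {G : Type*} [Group G] (t : TopologicalSpace G) : Prop :=
  ∀ g : G, @IsHomeomorph G G t t (fun x => g * x)

/-- A topology on a group `G` is *totally bounded* if every nonempty open set is large. -/
def IsTotallyBoundedTop {G : Type*} [Group G] (t : TopologicalSpace G) : Prop :=
  ∀ U : Set G, IsOpen[t] U → U.Nonempty → IsLarge U


private lemma nd_mono {X : Type*} [TopologicalSpace X] {s t : Set X}
    (h : s ⊆ t) (ht : IsNowhereDense t) : IsNowhereDense s :=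
  Set.eq_empty_of_subset_empty (ht ▸ interior_mono (closure_mono h))

private lemma nd_union {X : Type*} [TopologicalSpace X] {s t : Set X}
    (hs : IsNowhereDense s) (ht : IsNowhereDense t) : IsNowhereDense (s ∪ t) := by
  have hs' : IsClosed (closure s) ∧ IsNowhereDense (closure s) := ⟨isClosed_closure, hs.closure⟩
  have ht' : IsClosed (closure t) ∧ IsNowhereDense (closure t) := ⟨isClosed_closure, ht.closure⟩
  rw [isClosed_isNowhereDense_iff_compl] at hs' ht'
  have hu : IsClosed (closure s ∪ closure t) ∧ IsNowhereDense (closure s ∪ closure t) := by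
    rw [isClosed_isNowhereDense_iff_compl, Set.compl_union]
    exact ⟨hs'.1.inter ht'.1, hs'.2.inter_of_isOpen_left ht'.2 hs'.1⟩
  exact nd_mono (Set.union_subset_union subset_closure subset_closure) hu.2

/-- If `A` is nowhere dense with respect to some left-invariant totally bounded topology
on `G`, then `G \ FA` is large for every finite `F ⊆ G`; consequently `A` is small. -/
theorem compl_large_and_small_of_nowhereDense {G : Type*} [Group G] (A : Set G)
    (h : ∃ t : TopologicalSpace G, IsLeftInvariantTop t ∧ IsTotallyBoundedTop t ∧
      @interior G t (@closure G t A) = ∅) :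
    (∀ F : Finset G, IsLarge ((Set.univ : Set G) \ ((F : Set G) * A))) ∧ IsSmallSet A := by
  classical
  obtain ⟨t, hinv, htb, hA⟩ := h
  letI := t
  have hmono : ∀ S T : Set G, S ⊆ T → IsLarge S → IsLarge T := by
    rintro S T hST ⟨F, hF⟩
    exact ⟨F, Set.eq_univ_of_univ_subset (hF ▸ Set.mul_subset_mul_left hST)⟩
  have key : ∀ F : Finset G, IsLarge ((Set.univ : Set G) \ ((F : Set G) * A)) := by
    intro F
    have hnd : IsNowhereDense ((F : Set G) * A) := by
      have hbU : IsNowhereDense (⋃ g ∈ F, (fun x => g * x) '' A) := by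
        induction F using Finset.induction with
        | empty => simp [IsNowhereDense]
        | insert g F hg ih =>
          rw [Finset.set_biUnion_insert]
          refine nd_union ?_ ih
          obtain ⟨e, he⟩ := isHomeomorph_iff_exists_homeomorph.mp (hinv _)
          rw [← he]
          show IsNowhereDense (e '' A)
          unfold IsNowhereDense
          rw [← e.image_closure, ← e.image_interior, hA, Set.image_empty]
      have hsub : (F : Set G) * A ⊆ ⋃ g ∈ F, (fun x => g * x) '' A := by
        rintro x hx
        rw [Set.mem_mul] at hx
        obtain ⟨f, hf, a, ha, rfl⟩ := hx
        exact Set.mem_biUnion hf ⟨a, ha, rfl⟩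
      exact nd_mono hsub hbU
    have hUopen : IsOpen (closure ((F : Set G) * A))ᶜ := isClosed_closure.isOpen_compl
    have hUne : (closure ((F : Set G) * A))ᶜ.Nonempty := by
      rw [Set.nonempty_compl]
      intro hcl
      have : interior (closure ((F : Set G) * A)) = Set.univ := by
        rw [hcl, interior_univ]
      rw [hnd] at this
      exact Set.empty_ne_univ this
    have hUlarge := htb _ hUopen hUne
    refine hmono _ _ ?_ hUlarge
    intro x hx
    exact ⟨Set.mem_univ x, fun hx' => hx (subset_closure hx')⟩
  refine ⟨key, ?_⟩
  rintro B ⟨E, hE⟩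
  obtain ⟨D, hD⟩ := key E
  refine ⟨D * E, ?_⟩
  apply Set.eq_univ_of_forall
  intro x
  have hx : x ∈ (D : Set G) * (Set.univ \ ((E : Set G) * A)) := by rw [hD]; trivial
  rw [Set.mem_mul] at hx
  obtain ⟨d, hd, z, hz, rfl⟩ := hx
  have hzB : z ∈ (E : Set G) * B := by rw [hE]; trivial
  rw [Set.mem_mul] at hzB
  obtain ⟨e, he, b, hb, rfl⟩ := hzB
  have hbA : b ∉ A := fun hbA => hz.2 (Set.mul_mem_mul he hbA)
  rw [Finset.coe_mul, ← mul_assoc]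
  exact Set.mul_mem_mul (Set.mul_mem_mul hd he) ⟨hb, hbA⟩
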